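/- Properties of the restricted squared norm on a Hilbert space: Let E be a real Hilbert space (identify E* with E via the inner product), let C ⊆ E be nonempty, closed and convex, let ρ = sup_{x,y∈C} ‖x − y‖ ∈ (0, +∞], and define ψ(x) = ‖x‖²/2 for x ∈ C and ψ(x) = +∞ otherwise. Let P_C denote the metric projection onto C. Then: (i) for every x ∈ E, x ∈ ∂ψ(P_C(x)); in particular ∂ψ(C) := ∪_{z∈C} ∂ψ(z) = E; (ii) for every x ∈ E, ∂ψ*(x) = {P_C(x)}, i.e. the subdifferential of ψ* is single-valued and equals P_C; (iii) ψ*(x) = ‖x‖²/2 − ‖x − P_C(x)‖²/2 for all x ∈ E; (iv) ψ is Q_ρ-convex: B_ψ(y, z*) ≥ Q_ρ(‖y − z‖) for every y ∈ E, z ∈ C, z* ∈ ∂ψ(z). -/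

import Mathlib

open scoped ENNReal

/-- Fenchel conjugate on a real Hilbert space (`E*` identified with `E` via the inner
product): `ψ*(y) = sup_x (⟨y, x⟩ − ψ(x))`. -/
noncomputable def fconj {E : Type*} [NormedAddCommGroup E] [InnerProductSpace ℝ E]
    (ψ : E → EReal) (p : E) : EReal :=
  ⨆ x : E, (((inner ℝ p x : ℝ)) : EReal) - ψ x

/-- Generalized Bregman divergence `B_ψ(x, y) = ψ(x) + ψ*(y) − ⟨y, x⟩`. -/
noncomputable def breg {E : Type*} [NormedAddCommGroup E] [InnerProductSpace ℝ E]
    (ψ : E → EReal) (x : E) (p : E) : EReal :=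
  ψ x + fconj ψ p - (((inner ℝ p x : ℝ)) : EReal)

/-- Subdifferential: `∂ψ(x) = {y : B_ψ(x, y) = 0}`. -/
def subdiff {E : Type*} [NormedAddCommGroup E] [InnerProductSpace ℝ E]
    (ψ : E → EReal) (x : E) : Set E :=
  {p | breg ψ x p = 0}

/-- The truncated quadratic `Q_ρ` for `ρ ∈ (0, +∞]`:
`Q_ρ(x) = x²/2` if `|x| ≤ ρ`, `+∞` otherwise. -/
noncomputable def Qtrunc (ρ : ℝ≥0∞) (x : ℝ) : EReal :=
  open scoped Classical in
  if ENNReal.ofReal |x| ≤ ρ then ((x ^ 2 / 2 : ℝ) : EReal) else ⊤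

/-- **Properties of the restricted squared norm on a Hilbert space.**
With `ψ = ‖·‖²/2 + χ_C` and `P_C` the metric projection onto the nonempty closed
convex set `C`, and `ρ = diam C ∈ (0, +∞]`:
(i) `x ∈ ∂ψ(P_C x)` for all `x`, and `∂ψ(C) = E`;
(ii) `∂ψ*(x) = {P_C x}` for all `x`;
(iii) `ψ*(x) = ‖x‖²/2 − ‖x − P_C x‖²/2`;
(iv) `ψ` is `Q_ρ`-convex. -/
theorem restricted_squared_norm_properties
    {E : Type*} [NormedAddCommGroup E] [InnerProductSpace ℝ E] [CompleteSpace E]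
    (C : Set E) (hCne : C.Nonempty) (hCclosed : IsClosed C) (hCconv : Convex ℝ C)
    (hρ : 0 < EMetric.diam C)
    (ψ : E → EReal)
    (hψ : ∀ x : E, (x ∈ C → ψ x = ((‖x‖ ^ 2 / 2 : ℝ) : EReal)) ∧ (x ∉ C → ψ x = ⊤))
    (P : E → E)
    (hP : ∀ x : E, P x ∈ C ∧ ∀ y ∈ C, ‖x - P x‖ ≤ ‖x - y‖) :
    (∀ x : E, x ∈ subdiff ψ (P x)) ∧
    (⋃ z ∈ C, subdiff ψ z) = Set.univ ∧
    (∀ x : E, {z : E | ψ z + fconj ψ x = (((inner ℝ x z : ℝ)) : EReal)} = {P x}) ∧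
    (∀ x : E, fconj ψ x = ((‖x‖ ^ 2 / 2 - ‖x - P x‖ ^ 2 / 2 : ℝ) : EReal)) ∧
    (∀ (y z p : E), z ∈ C → p ∈ subdiff ψ z →
      Qtrunc (EMetric.diam C) ‖y - z‖ ≤ breg ψ y p) := by
  -- key identity: ⟪x,z⟫ - ‖z‖²/2 = ‖x‖²/2 - ‖x-z‖²/2
  have key : ∀ x z : E, (inner ℝ x z : ℝ) - ‖z‖ ^ 2 / 2 = ‖x‖ ^ 2 / 2 - ‖x - z‖ ^ 2 / 2 := by
    intro x z
    have h := norm_sub_sq_real x z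
    nlinarith [h]
  -- (iii) fconj formula
  have hfc : ∀ x : E, fconj ψ x = ((‖x‖ ^ 2 / 2 - ‖x - P x‖ ^ 2 / 2 : ℝ) : EReal) := by
    intro x
    apply le_antisymm
    · apply iSup_le
      intro z
      by_cases hz : z ∈ C
      · rw [(hψ z).1 hz, ← EReal.coe_sub, EReal.coe_le_coe_iff]
        rw [key x z]
        have := (hP x).2 z hz
        nlinarith [norm_nonneg (x - z), norm_nonneg (x - P x)]
      · rw [(hψ z).2 hz]
        simp
    · have h1 : (((inner ℝ x (P x) : ℝ)) : EReal) - ψ (P x)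
          = ((‖x‖ ^ 2 / 2 - ‖x - P x‖ ^ 2 / 2 : ℝ) : EReal) := by
        rw [(hψ (P x)).1 (hP x).1, ← EReal.coe_sub, EReal.coe_eq_coe_iff]
        rw [← key x (P x)]
      rw [← h1]
      exact le_iSup (fun z => (((inner ℝ x z : ℝ)) : EReal) - ψ z) (P x)
  -- uniqueness of nearest point
  have huniq : ∀ x z : E, z ∈ C → ‖x - z‖ = ‖x - P x‖ → z = P x := by
    intro x z hz heq
    have hm : (1/2 : ℝ) • z + (1/2 : ℝ) • P x ∈ C :=
      hCconv hz (hP x).1 (by norm_num) (by norm_num) (by norm_num)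
    have hxm : x - ((1/2 : ℝ) • z + (1/2 : ℝ) • P x)
        = (1/2 : ℝ) • ((x - z) + (x - P x)) := by module
    have hle := (hP x).2 _ hm
    rw [hxm, norm_smul] at hle
    have hpar := norm_add_sq_real (x - z) (x - P x)
    have hsub : (x - z) - (x - P x) = P x - z := by abel
    have hinner := norm_sub_sq_real (x - z) (x - P x)
    rw [hsub] at hinner
    have hz0 : ‖P x - z‖ ^ 2 ≤ 0 := by
      have h2 : ‖(1/2 : ℝ)‖ = 1/2 := by norm_num
      rw [h2] at hle
      nlinarith [norm_nonneg ((x - z) + (x - P x)), norm_nonneg (x - P x)]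
    have : P x - z = 0 := by
      have := norm_nonneg (P x - z)
      have h0 : ‖P x - z‖ = 0 := by nlinarith
      exact norm_eq_zero.mp h0
    rw [← sub_eq_zero]
    rw [← neg_sub]
    simp [this]
  -- (i)
  have hi : ∀ x : E, x ∈ subdiff ψ (P x) := by
    intro x
    show breg ψ (P x) x = 0
    unfold breg
    rw [hfc x, (hψ (P x)).1 (hP x).1, ← EReal.coe_add, ← EReal.coe_sub, EReal.coe_eq_zero]
    have := key x (P x)
    linarith
  -- (ii) set equality
  have hii : ∀ x : E, {z : E | ψ z + fconj ψ x = (((inner ℝ x z : ℝ)) : EReal)} = {P x} := by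
    intro x
    ext z
    simp only [Set.mem_setOf_eq, Set.mem_singleton_iff]
    constructor
    · intro h
      by_cases hz : z ∈ C
      · rw [(hψ z).1 hz, hfc x, ← EReal.coe_add, EReal.coe_eq_coe_iff] at h
        have hk := key x z
        have hnorm : ‖x - z‖ ^ 2 = ‖x - P x‖ ^ 2 := by linarith
        have : ‖x - z‖ = ‖x - P x‖ := by
          nlinarith [norm_nonneg (x - z), norm_nonneg (x - P x)]
        exact huniq x z hz this
      · rw [(hψ z).2 hz, hfc x] at h
        rw [EReal.top_add_coe] at h
        exact absurd h (by simp)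
    · rintro rfl
      rw [(hψ (P x)).1 (hP x).1, hfc x, ← EReal.coe_add, EReal.coe_eq_coe_iff]
      have := key x (P x)
      linarith
  refine ⟨hi, ?_, hii, hfc, ?_⟩
  · ext x
    simp only [Set.mem_iUnion, Set.mem_univ, iff_true]
    exact ⟨P x, (hP x).1, hi x⟩
  · intro y z p hz hp
    -- z = P p
    have hzP : z = P p := by
      have : z ∈ {w : E | ψ w + fconj ψ p = (((inner ℝ p w : ℝ)) : EReal)} := by
        have hb : breg ψ z p = 0 := hp
        unfold breg at hb
        rw [(hψ z).1 hz, hfc p, ← EReal.coe_add, ← EReal.coe_sub, EReal.coe_eq_zero] at hb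
        simp only [Set.mem_setOf_eq]
        rw [(hψ z).1 hz, hfc p, ← EReal.coe_add, EReal.coe_eq_coe_iff]
        linarith
      rw [hii p] at this
      exact this
    subst hzP
    by_cases hy : y ∈ C
    · -- real case
      unfold breg
      rw [(hψ y).1 hy, hfc p, ← EReal.coe_add, ← EReal.coe_sub]
      have hcond : ENNReal.ofReal |‖y - P p‖| ≤ EMetric.diam C := by
        rw [abs_of_nonneg (norm_nonneg _)]
        have : ENNReal.ofReal ‖y - P p‖ = edist y (P p) := by
          rw [edist_dist, dist_eq_norm]
        rw [this]
        exact EMetric.edist_le_diam_of_mem hy hz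
      rw [Qtrunc, if_pos hcond, EReal.coe_le_coe_iff]
      -- variational inequality
      have hproj : ‖p - P p‖ = ⨅ w : C, ‖p - w‖ := by
        haveI : Nonempty C := ⟨⟨P p, (hP p).1⟩⟩
        apply le_antisymm
        · exact le_ciInf fun w => (hP p).2 w w.2
        · have hbdd : BddBelow (Set.range fun w : C => ‖p - (w : E)‖) := by
            refine ⟨0, ?_⟩
            rintro _ ⟨w, rfl⟩
            positivity
          exact ciInf_le hbdd ⟨P p, (hP p).1⟩
      have hvar := (norm_eq_iInf_iff_real_inner_le_zero hCconv (hP p).1).mp hproj y hy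
      have e1 := norm_sub_sq_real y (P p)
      have e2 := norm_sub_sq_real p (P p)
      have e3 := norm_sub_sq_real p y
      have e4 : (inner ℝ (p - P p) (y - P p) : ℝ)
          = (inner ℝ p y : ℝ) - inner ℝ p (P p) - inner ℝ (P p) y + inner ℝ (P p) (P p) := by
        simp [inner_sub_left, inner_sub_right]; ring
      have hc1 := real_inner_comm p y
      have hc2 := real_inner_comm p (P p)
      have hc3 := real_inner_comm (P p) y
      have hs := real_inner_self_eq_norm_sq (P p)
      nlinarith [hvar]
    · unfold breg
      rw [(hψ y).2 hy, hfc p, EReal.top_add_coe, EReal.top_sub_coe]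
      exact le_top
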